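/- Let n = 3k+2 where k is even and n > 50. Then: (a) every downhill weighing a : {1,…,n} → ℤ (a(1) > … > a(n)) with Σ_{i=1}^n i·a(i) ∈ {0, −1} has total weight Σ_{i=1}^n i·|a(i)| ≥ (8k³+24k²+22k+6)/3; and (b) there exists a downhill weighing a with Σ_{i=1}^n i·a(i) = 0 (a balance) whose total weight equals (8k³+24k²+22k+6)/3. Hence the minimum total weight of a downhill weighing that is balanced or a tight imbalance is (8k³+24k²+22k+6)/3, achieved by a balance. -/

import Mathlib

set_option linter.unusedVariables false
set_option linter.unnecessarySeqFocus false

open Finset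

private lemma sum_Ioc_id (M : ℕ) : 2 * ∑ i ∈ Finset.Ioc 0 M, (i:ℤ) = M*(M+1) := by
  induction M with
  | zero => simp
  | succ m ih =>
    rw [Finset.sum_Ioc_succ_top (Nat.zero_le _)]
    push_cast
    linear_combination ih

private lemma sum_Ioc_sq (M : ℕ) : 6 * ∑ i ∈ Finset.Ioc 0 M, (i:ℤ)*i = M*(M+1)*(2*M+1) := by
  induction M with
  | zero => simp
  | succ m ih =>
    rw [Finset.sum_Ioc_succ_top (Nat.zero_le _)]
    push_cast
    linear_combination ih

private lemma icc_eq_ioc (n : ℕ) : Finset.Icc 1 n = Finset.Ioc 0 n := Finset.Icc_add_one_left_eq_Ioc 0 n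

/-- closed form for `∑ i (p - i)` -/
private lemma B_closed (n p : ℕ) :
    6 * ∑ i ∈ Finset.Icc 1 n, (i:ℤ) * ((p:ℤ) - i) =
      3*(p:ℤ)*(n:ℤ)*((n:ℤ)+1) - (n:ℤ)*((n:ℤ)+1)*(2*(n:ℤ)+1) := by
  rw [icc_eq_ioc]
  have h1 : ∑ i ∈ Finset.Ioc 0 n, (i:ℤ) * ((p:ℤ) - i)
      = (p:ℤ) * (∑ i ∈ Finset.Ioc 0 n, (i:ℤ)) - ∑ i ∈ Finset.Ioc 0 n, (i:ℤ)*i := by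
    rw [Finset.mul_sum, ← Finset.sum_sub_distrib]
    exact Finset.sum_congr rfl (by intro i _; ring)
  rw [h1]
  linear_combination 3*(p:ℤ)*(sum_Ioc_id n) - sum_Ioc_sq n

/-- closed form for `∑ i |i - p|`, `p ≤ n` -/
private lemma A_closed (n p : ℕ) (hpn : p ≤ n) :
    6 * ∑ i ∈ Finset.Icc 1 n, (i:ℤ) * |(i:ℤ) - (p:ℤ)| =
      (n:ℤ)*((n:ℤ)+1)*(2*(n:ℤ)+1) - 3*(p:ℤ)*(n:ℤ)*((n:ℤ)+1) + 2*((p:ℤ)^3 - (p:ℤ)) := by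
  rw [icc_eq_ioc]
  rw [← Finset.sum_Ioc_consecutive _ (Nat.zero_le p) hpn]
  have h1 : ∑ i ∈ Finset.Ioc 0 p, (i:ℤ) * |(i:ℤ) - (p:ℤ)|
      = (p:ℤ) * (∑ i ∈ Finset.Ioc 0 p, (i:ℤ)) - ∑ i ∈ Finset.Ioc 0 p, (i:ℤ)*i := by
    rw [Finset.mul_sum, ← Finset.sum_sub_distrib]
    refine Finset.sum_congr rfl ?_
    intro i hi
    rw [Finset.mem_Ioc] at hi
    rw [abs_of_nonpos (by
      have : (i:ℤ) ≤ (p:ℤ) := by exact_mod_cast hi.2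
      linarith)]
    ring
  have h2 : ∑ i ∈ Finset.Ioc p n, (i:ℤ) * |(i:ℤ) - (p:ℤ)|
      = (∑ i ∈ Finset.Ioc p n, (i:ℤ)*i) - (p:ℤ) * (∑ i ∈ Finset.Ioc p n, (i:ℤ)) := by
    rw [Finset.mul_sum, ← Finset.sum_sub_distrib]
    refine Finset.sum_congr rfl ?_
    intro i hi
    rw [Finset.mem_Ioc] at hi
    rw [abs_of_nonneg (by
      have : (p:ℤ) ≤ (i:ℤ) := by exact_mod_cast le_of_lt hi.1
      linarith)]
    ring
  have h3 : (∑ i ∈ Finset.Ioc 0 p, (i:ℤ)) + ∑ i ∈ Finset.Ioc p n, (i:ℤ)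
      = ∑ i ∈ Finset.Ioc 0 n, (i:ℤ) := Finset.sum_Ioc_consecutive _ (Nat.zero_le p) hpn
  have h4 : (∑ i ∈ Finset.Ioc 0 p, (i:ℤ)*i) + ∑ i ∈ Finset.Ioc p n, (i:ℤ)*i
      = ∑ i ∈ Finset.Ioc 0 n, (i:ℤ)*i := Finset.sum_Ioc_consecutive _ (Nat.zero_le p) hpn
  rw [h1, h2]
  linear_combination (6*(p:ℤ))*(sum_Ioc_id p) - 2*(sum_Ioc_sq p)
    - 3*(p:ℤ)*(sum_Ioc_id n) + sum_Ioc_sq n - 6*(p:ℤ)*h3 + 6*h4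


private lemma partA (k n : ℕ) (hn : n = 3 * k + 2) (hn50 : 50 < n)
    (a : ℕ → ℤ) (hd : ∀ i j : ℕ, 1 ≤ i → i < j → j ≤ n → a j < a i)
    (hs : ∑ i ∈ Finset.Icc 1 n, (i : ℤ) * a i = 0 ∨
        ∑ i ∈ Finset.Icc 1 n, (i : ℤ) * a i = -1) :
    8 * (k : ℤ) ^ 3 + 24 * (k : ℤ) ^ 2 + 22 * (k : ℤ) + 6 ≤
        3 * ∑ i ∈ Finset.Icc 1 n, (i : ℤ) * |a i| := by
  -- gap lemma
  have gap : ∀ j i : ℕ, 1 ≤ i → i ≤ j → j ≤ n → a j + ((j:ℤ) - (i:ℤ)) ≤ a i := by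
    intro j
    induction j with
    | zero => intro i hi hij _; omega
    | succ j ih =>
      intro i hi hij hjn
      rcases Nat.lt_or_ge i (j+1) with h | h
      · have h1 : i ≤ j := by omega
        have h2 := ih i hi h1 (by omega)
        have h3 : a (j+1) < a j := hd j (j+1) (by omega) (by omega) hjn
        push_cast
        push_cast at h2
        linarith
      · have : i = j + 1 := by omega
        subst this
        simp
  -- the threshold p
  have hex : ∃ p : ℕ, p ≤ n ∧ (∀ i : ℕ, 1 ≤ i → i ≤ p → 0 ≤ a i)
      ∧ (∀ i : ℕ, p + 1 ≤ i → i ≤ n → a i ≤ -1) := by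
    by_cases hFne : ((Finset.Icc 1 n).filter (fun i => 0 ≤ a i)).Nonempty
    · set F := (Finset.Icc 1 n).filter (fun i => 0 ≤ a i) with hF
      have hmem := F.max'_mem hFne
      have hmem' : (1 ≤ F.max' hFne ∧ F.max' hFne ≤ n) ∧ 0 ≤ a (F.max' hFne) := by
        simpa [hF, Finset.mem_filter, Finset.mem_Icc] using hmem
      refine ⟨F.max' hFne, hmem'.1.2, ?_, ?_⟩
      · intro i hi hip
        rcases Nat.lt_or_ge i (F.max' hFne) with h | h
        · exact le_of_lt (lt_of_le_of_lt hmem'.2 (hd i (F.max' hFne) hi h hmem'.1.2))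
        · have : i = F.max' hFne := by omega
          rw [this]; exact hmem'.2
      · intro i hpi hin
        by_contra hc
        push_neg at hc
        have hai : 0 ≤ a i := by omega
        have hiF : i ∈ F := by
          simp only [hF, Finset.mem_filter, Finset.mem_Icc]
          exact ⟨⟨by omega, hin⟩, hai⟩
        have := F.le_max' i hiF
        omega
    · refine ⟨0, Nat.zero_le n, by intro i h1 h2; omega, ?_⟩
      intro i hpi hin
      by_contra hc
      push_neg at hc
      exact hFne ⟨i, by simp only [Finset.mem_filter, Finset.mem_Icc]; exact ⟨⟨by omega, hin⟩, by omega⟩⟩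
  obtain ⟨p, hpn, hpos, hneg⟩ := hex
  -- pointwise key identity
  have hkey : ∀ i ∈ Finset.Icc 1 n, (i:ℤ) * |a i| =
      (i:ℤ) * |(i:ℤ) - (p:ℤ)| + (i:ℤ) * |a i + (i:ℤ) - (p:ℤ)| := by
    intro i hi
    rw [Finset.mem_Icc] at hi
    rcases Nat.lt_or_ge p i with h | h
    · -- i > p
      have h1 : a (p+1) ≤ -1 := hneg (p+1) le_rfl (by omega)
      have h2 : a i + ((i:ℤ) - ((p:ℤ)+1)) ≤ a (p+1) := by
        have := gap i (p+1) (by omega) (by omega) hi.2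
        push_cast at this ⊢
        linarith
      have h3 : a i ≤ (p:ℤ) - (i:ℤ) := by linarith
      have h4 : (p:ℤ) < (i:ℤ) := by exact_mod_cast h
      rw [abs_of_nonpos (by linarith), abs_of_nonneg (by linarith),
        abs_of_nonpos (by linarith)]
      ring
    · -- i ≤ p
      have hp1 : 1 ≤ p := le_trans hi.1 h
      have h1 : 0 ≤ a p := hpos p hp1 le_rfl
      have h2 : a p + ((p:ℤ) - (i:ℤ)) ≤ a i := gap p i hi.1 h hpn
      have h4 : (i:ℤ) ≤ (p:ℤ) := by exact_mod_cast h
      rw [abs_of_nonneg (by linarith), abs_of_nonpos (by linarith),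
        abs_of_nonneg (by linarith)]
      ring
  -- sums
  have hW : ∑ i ∈ Finset.Icc 1 n, (i:ℤ) * |a i| =
      (∑ i ∈ Finset.Icc 1 n, (i:ℤ) * |(i:ℤ) - (p:ℤ)|)
      + ∑ i ∈ Finset.Icc 1 n, (i:ℤ) * |a i + (i:ℤ) - (p:ℤ)| := by
    rw [← Finset.sum_add_distrib]
    exact Finset.sum_congr rfl hkey
  have hSsplit : ∑ i ∈ Finset.Icc 1 n, (i:ℤ) * a i =
      (∑ i ∈ Finset.Icc 1 n, (i:ℤ) * ((p:ℤ) - i))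
      + ∑ i ∈ Finset.Icc 1 n, (i:ℤ) * (a i + (i:ℤ) - (p:ℤ)) := by
    rw [← Finset.sum_add_distrib]
    exact Finset.sum_congr rfl (by intro i _; ring)
  have hEbound : |∑ i ∈ Finset.Icc 1 n, (i:ℤ) * (a i + (i:ℤ) - (p:ℤ))|
      ≤ ∑ i ∈ Finset.Icc 1 n, (i:ℤ) * |a i + (i:ℤ) - (p:ℤ)| := by
    refine le_trans (Finset.abs_sum_le_sum_abs _ _) (le_of_eq ?_)
    refine Finset.sum_congr rfl ?_
    intro i _
    rw [abs_mul, abs_of_nonneg (by positivity : (0:ℤ) ≤ (i:ℤ))]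
  have hA := A_closed n p hpn
  have hB := B_closed n p
  -- notation
  set W := ∑ i ∈ Finset.Icc 1 n, (i:ℤ) * |a i| with hWdef
  set A := ∑ i ∈ Finset.Icc 1 n, (i:ℤ) * |(i:ℤ) - (p:ℤ)| with hAdef
  set Bv := ∑ i ∈ Finset.Icc 1 n, (i:ℤ) * ((p:ℤ) - i) with hBdef
  set E := ∑ i ∈ Finset.Icc 1 n, (i:ℤ) * (a i + (i:ℤ) - (p:ℤ)) with hEdef
  set We := ∑ i ∈ Finset.Icc 1 n, (i:ℤ) * |a i + (i:ℤ) - (p:ℤ)| with hWedef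
  set S := ∑ i ∈ Finset.Icc 1 n, (i:ℤ) * a i with hSdef
  clear_value W A Bv E We S
  have hnZ : (n:ℤ) = 3*(k:ℤ) + 2 := by exact_mod_cast congrArg (Nat.cast : ℕ → ℤ) hn
  have hPleN : (p:ℤ) ≤ (n:ℤ) := by exact_mod_cast hpn
  set K := (k:ℤ) with hKdef
  set P := (p:ℤ) with hPdef
  have hK0 : 0 ≤ K := Int.natCast_nonneg k
  have hP0 : 0 ≤ P := Int.natCast_nonneg p
  have hPle : P ≤ 3*K + 2 := by rw [hnZ] at hPleN; exact hPleN
  have hS0 : S ≤ 0 := by rcases hs with h | h <;> rw [h] <;> norm_num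
  have hSm1 : -1 ≤ S := by rcases hs with h | h <;> rw [h] <;> norm_num
  rw [hnZ] at hA hB
  have hE' : E = S - Bv := by rw [hSsplit]; ring
  have hWe1 : Bv - S ≤ We := by
    have h1 : -|E| ≤ E := neg_abs_le E
    linarith [hEbound]
  have hWe2 : S - Bv ≤ We := by
    have h1 : E ≤ |E| := le_abs_self E
    linarith [hEbound]
  clear hE' hEbound hSsplit hkey hs hd hpos hneg gap hpn hn hn50
  clear hWdef hAdef hBdef hEdef hWedef hSdef
  rcases le_or_gt (2*K+2) P with hc | hc
  · -- case P large
    have hW3 : P^3 - P - 3*S ≤ 3*W := by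
      have : W = A + We := hW
      linarith
    have hfact : 0 ≤ (P - (2*K+2)) * (P^2 + (2*K+2)*P + (2*K+2)^2 - 1) := by
      apply mul_nonneg (by linarith)
      have t1 : 0 ≤ P * P := mul_nonneg hP0 hP0
      have t2 : 0 ≤ (2*K+2) * P := mul_nonneg (by linarith) hP0
      nlinarith [sq_nonneg K]
    have hid : (P - (2*K+2)) * (P^2 + (2*K+2)*P + (2*K+2)^2 - 1)
        = P^3 - P - (8*K^3+24*K^2+22*K+6) := by ring
    linarith [hW3, hS0]
  · -- case P small
    have hP21 : P ≤ 2*K + 1 := by omega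
    have hW3 : P^3 - P - 6*Bv - 3 ≤ 3*W := by
      have hWAe : W = A + We := hW
      -- 3A = P^3 - P - 3Bv
      linarith
    have hfact : 0 ≤ ((2*K+1) - P) * ((27*K^2+45*K+19) - (P^2 + (2*K+1)*P + (2*K+1)^2)) := by
      apply mul_nonneg (by linarith)
      have t1 : P*P ≤ (2*K+1)*(2*K+1) := mul_le_mul hP21 hP21 hP0 (by linarith)
      have t2 : (2*K+1)*P ≤ (2*K+1)*(2*K+1) := mul_le_mul_of_nonneg_left hP21 (by linarith)
      nlinarith [sq_nonneg K]
    have hid : P^3 - P - (3*P*(3*K+2)*(3*K+3) - (3*K+2)*(3*K+3)*(2*(3*K+2)+1))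
        = 8*K^3+30*K^2+34*K+12
          + ((2*K+1) - P)*((27*K^2+45*K+19) - (P^2+(2*K+1)*P+(2*K+1)^2)) := by ring
    have hK2 : 0 ≤ 6*K^2 + 12*K := by positivity
    linarith [hW3, hfact, hB, hid]


private lemma key_sum (n s t : ℕ) (h1 : 1 ≤ s) (hst : s + t = n + 1) :
    2 * ∑ i ∈ Finset.Icc 1 n, (i:ℤ) * (if s ≤ i then 1 else 0)
      = (t:ℤ) * (2*(n:ℤ) - t + 1) := by
  have hsn : s - 1 ≤ n := by omega
  have h3 : ∑ i ∈ Finset.Icc 1 n, (i:ℤ) * (if s ≤ i then 1 else 0)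
      = ∑ i ∈ Finset.Ioc (s-1) n, (i:ℤ) := by
    rw [show Finset.Icc 1 n = Finset.Ioc 0 n from Finset.Icc_add_one_left_eq_Ioc 0 n]
    rw [← Finset.sum_Ioc_consecutive _ (Nat.zero_le (s-1)) hsn]
    have e1 : ∑ i ∈ Finset.Ioc 0 (s-1), (i:ℤ) * (if s ≤ i then 1 else 0) = 0 := by
      refine Finset.sum_eq_zero ?_
      intro i hi
      rw [Finset.mem_Ioc] at hi
      rw [if_neg (by omega)]
      ring
    have e2 : ∑ i ∈ Finset.Ioc (s-1) n, (i:ℤ) * (if s ≤ i then 1 else 0)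
        = ∑ i ∈ Finset.Ioc (s-1) n, (i:ℤ) := by
      refine Finset.sum_congr rfl ?_
      intro i hi
      rw [Finset.mem_Ioc] at hi
      rw [if_pos (by omega)]
      ring
    rw [e1, e2, zero_add]
  rw [h3]
  have h4 : (∑ i ∈ Finset.Ioc 0 (s-1), (i:ℤ)) + ∑ i ∈ Finset.Ioc (s-1) n, (i:ℤ)
      = ∑ i ∈ Finset.Ioc 0 n, (i:ℤ) := Finset.sum_Ioc_consecutive _ (Nat.zero_le _) hsn
  have h5 := sum_Ioc_id (s-1)
  have h6 := sum_Ioc_id n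
  have hc : ((s-1 : ℕ) : ℤ) = (s:ℤ) - 1 := by
    have := Nat.cast_sub h1 (R := ℤ)
    simpa using this
  rw [hc] at h5
  have hstZ : (s:ℤ) + (t:ℤ) = (n:ℤ) + 1 := by exact_mod_cast hst
  linear_combination h6 - h5 + 2*h4 + (-((s:ℤ) - (t:ℤ) + (n:ℤ)))*hstZ

private lemma exist_der (m : ℕ) (hm : 9 ≤ m) :
    ∃ d e r : ℕ, 1 ≤ d ∧ d ≤ 2*m ∧ e ≤ d ∧
      d*(d+1) + e*(e+1) + 2*r = 6*m+2 ∧ d+e+2+2*r ≤ m+1 := by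
  rcases lt_or_ge m 47 with hsmall | hbig
  · interval_cases m
    · exact ⟨7,0,0, by norm_num⟩
    · exact ⟨7,2,0, by norm_num⟩
    · exact ⟨7,3,0, by norm_num⟩
    · exact ⟨8,1,0, by norm_num⟩
    · exact ⟨8,2,1, by norm_num⟩
    · exact ⟨7,5,0, by norm_num⟩
    · exact ⟨9,1,0, by norm_num⟩
    · exact ⟨7,6,0, by norm_num⟩
    · exact ⟨9,3,1, by norm_num⟩
    · exact ⟨10,0,0, by norm_num⟩
    · exact ⟨10,2,0, by norm_num⟩
    · exact ⟨10,3,0, by norm_num⟩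
    · exact ⟨8,7,0, by norm_num⟩
    · exact ⟨11,1,0, by norm_num⟩
    · exact ⟨10,5,0, by norm_num⟩
    · exact ⟨9,7,0, by norm_num⟩
    · exact ⟨11,4,0, by norm_num⟩
    · exact ⟨12,1,0, by norm_num⟩
    · exact ⟨12,2,1, by norm_num⟩
    · exact ⟨12,3,1, by norm_num⟩
    · exact ⟨12,4,0, by norm_num⟩
    · exact ⟨13,0,0, by norm_num⟩
    · exact ⟨13,2,0, by norm_num⟩
    · exact ⟨13,3,0, by norm_num⟩
    · exact ⟨10,9,0, by norm_num⟩
    · exact ⟨11,8,1, by norm_num⟩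
    · exact ⟨14,1,0, by norm_num⟩
    · exact ⟨14,2,1, by norm_num⟩
    · exact ⟨13,6,0, by norm_num⟩
    · exact ⟨14,4,0, by norm_num⟩
    · exact ⟨14,4,3, by norm_num⟩
    · exact ⟨15,1,0, by norm_num⟩
    · exact ⟨15,2,1, by norm_num⟩
    · exact ⟨15,3,1, by norm_num⟩
    · exact ⟨15,4,0, by norm_num⟩
    · exact ⟨14,7,0, by norm_num⟩
    · exact ⟨16,0,0, by norm_num⟩
    · exact ⟨16,2,0, by norm_num⟩
  · -- asymptotic branch
    obtain ⟨s, hs1, hs2, hs16⟩ : ∃ s : ℕ, s^2 ≤ 6*m+2 ∧ 6*m+2 < s^2+2*s+1 ∧ 16 ≤ s := by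
      refine ⟨Nat.sqrt (6*m+2), Nat.sqrt_le' _, ?_, Nat.le_sqrt.mpr (by omega)⟩
      have h := Nat.lt_succ_sqrt' (6*m+2)
      rw [Nat.succ_eq_add_one] at h
      have he : (Nat.sqrt (6*m+2) + 1)^2 = (Nat.sqrt (6*m+2))^2 + 2*(Nat.sqrt (6*m+2)) + 1 := by ring
      omega
    obtain ⟨d, hco⟩ : ∃ d : ℕ, d + 1 = s := ⟨s-1, by omega⟩
    have hdd : d*(d+1) + s = s^2 := by
      calc d*(d+1) + s = d*s + s := by rw [hco]
        _ = (d+1)*s := by ring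
        _ = s*s := by rw [hco]
        _ = s^2 := (sq s).symm
    have hddle : d*(d+1) ≤ 6*m+2 := by linarith
    obtain ⟨N2, hN2eq⟩ : ∃ N2, d*(d+1) + N2 = 6*m+2 := ⟨6*m+2 - d*(d+1), Nat.add_sub_cancel' hddle⟩
    have hN2le : N2 ≤ 3*s := by linarith
    have hsm : 2*s + 11 ≤ m := by
      have hz1 : (s:ℤ)^2 ≤ 6*(m:ℤ)+2 := by exact_mod_cast hs1
      have hz2 : 47 ≤ (m:ℤ) := by exact_mod_cast hbig
      have hz : 2*(s:ℤ) + 11 ≤ (m:ℤ) := by nlinarith [sq_nonneg ((s:ℤ) - 17)]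
      exact_mod_cast hz
    obtain ⟨t, ht1, ht2⟩ : ∃ t : ℕ, t^2 ≤ N2 ∧ N2 < t^2+2*t+1 := by
      refine ⟨Nat.sqrt N2, Nat.sqrt_le' _, ?_⟩
      have h := Nat.lt_succ_sqrt' N2
      rw [Nat.succ_eq_add_one] at h
      have he : (Nat.sqrt N2 + 1)^2 = (Nat.sqrt N2)^2 + 2*(Nat.sqrt N2) + 1 := by ring
      omega
    have hts : 4*t ≤ s + 12 := by
      have hx1 : t^2 ≤ 3*s := le_trans ht1 hN2le
      have hz1 : (t:ℤ)^2 ≤ 3*(s:ℤ) := by exact_mod_cast hx1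
      have hz : 4*(t:ℤ) ≤ (s:ℤ) + 12 := by nlinarith [sq_nonneg ((t:ℤ) - 6)]
      exact_mod_cast hz
    have hts2 : t ≤ s := by
      by_contra hc
      push_neg at hc
      have hx1 : t^2 ≤ 3*s := le_trans ht1 hN2le
      have hz1 : (t:ℤ)^2 ≤ 3*(s:ℤ) := by exact_mod_cast hx1
      have hz2 : (s:ℤ) < (t:ℤ) := by exact_mod_cast hc
      have hz3 : 16 ≤ (s:ℤ) := by exact_mod_cast hs16
      nlinarith
    rcases Nat.eq_zero_or_pos t with ht0 | htpos
    · -- t = 0 : N2 = 0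
      have hN20 : N2 = 0 := by rw [ht0] at ht2; simpa using ht2
      refine ⟨d, 0, 0, by omega, by omega, by omega, ?_, by omega⟩
      have : 0*(0+1) = 0 := rfl
      omega
    · obtain ⟨e, hco2⟩ : ∃ e : ℕ, e + 1 = t := ⟨t-1, by omega⟩
      have hee : e*(e+1) + t = t^2 := by
        calc e*(e+1) + t = e*t + t := by rw [hco2]
          _ = (e+1)*t := by ring
          _ = t*t := by rw [hco2]
          _ = t^2 := (sq t).symm
      have heeN : e*(e+1) ≤ N2 := by linarith
      obtain ⟨r2, hr2eq⟩ : ∃ r2, e*(e+1) + r2 = N2 := ⟨N2 - e*(e+1), Nat.add_sub_cancel' heeN⟩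
      have hr2le : r2 ≤ 3*t := by linarith
      obtain ⟨x, hx⟩ := Nat.even_mul_succ_self d
      obtain ⟨y, hy⟩ := Nat.even_mul_succ_self e
      obtain ⟨r, hr⟩ : ∃ r, r2 = 2*r := by
        have hlin : r2 + (x+x) + (y+y) = 6*m+2 := by linarith
        exact ⟨r2/2, by omega⟩
      refine ⟨d, e, r, by omega, by omega, by omega, by linarith, by linarith⟩

private lemma partB (k n : ℕ) (heven : Even k) (hn : n = 3 * k + 2) (hn50 : 50 < n) :
    ∃ a : ℕ → ℤ, (∀ i j : ℕ, 1 ≤ i → i < j → j ≤ n → a j < a i) ∧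
      ∑ i ∈ Finset.Icc 1 n, (i : ℤ) * a i = 0 ∧
      3 * ∑ i ∈ Finset.Icc 1 n, (i : ℤ) * |a i| =
        8 * (k : ℤ) ^ 3 + 24 * (k : ℤ) ^ 2 + 22 * (k : ℤ) + 6 := by
  obtain ⟨m, hkm⟩ := heven
  have hm9 : 9 ≤ m := by omega
  obtain ⟨d, e, r, hd1, hd2m, hed, heq, hcost⟩ := exist_der m hm9
  obtain ⟨P, hPe⟩ : ∃ P, d+e+2+2*r+P = m+1 := ⟨m+1 - (d+e+2+2*r), by omega⟩
  set q : ℕ := 2*k+2 with hq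
  have hdk : d ≤ k := by omega
  have hek : e ≤ k := by omega
  have hqn : q ≤ n := by omega
  have hqnd : q ≤ n - d := by omega
  have h1nd : 1 ≤ n - d := by omega
  set a : ℕ → ℤ := fun i => (q:ℤ) - i - (if n-d ≤ i then 1 else 0) - (if n-e ≤ i then 1 else 0)
      - (r:ℤ)*(if n-1 ≤ i then 1 else 0) - (P:ℤ)*(if n ≤ i then 1 else 0) with ha
  -- sum identities
  have hk1 := key_sum n (n-d) (d+1) h1nd (by omega)
  have hk2 := key_sum n (n-e) (e+1) (by omega) (by omega)
  have hk3 := key_sum n (n-1) 2 (by omega) (by omega)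
  have hk4 := key_sum n n 1 (by omega) (by omega)
  have hB6 := B_closed n q
  have hA6 := A_closed n q hqn
  -- cast facts
  have hnZ : (n:ℤ) = 6*(m:ℤ)+2 := by
    have : n = 6*m+2 := by omega
    exact_mod_cast congrArg (Nat.cast : ℕ → ℤ) this
  have hqZ : (q:ℤ) = 4*(m:ℤ)+2 := by
    have : q = 4*m+2 := by omega
    exact_mod_cast congrArg (Nat.cast : ℕ → ℤ) this
  have hkZ : (k:ℤ) = 2*(m:ℤ) := by
    have : k = 2*m := by omega
    exact_mod_cast congrArg (Nat.cast : ℕ → ℤ) this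
  have heqZ : (d:ℤ)*((d:ℤ)+1) + (e:ℤ)*((e:ℤ)+1) + 2*(r:ℤ) = 6*(m:ℤ)+2 := by exact_mod_cast heq
  have hPeZ : (d:ℤ)+(e:ℤ)+2+2*(r:ℤ)+(P:ℤ) = (m:ℤ)+1 := by exact_mod_cast hPe
  push_cast at hk1 hk2 hk3 hk4
  rw [hnZ] at hk1 hk2 hk3 hk4 hB6 hA6
  rw [hqZ] at hB6 hA6
  refine ⟨a, ?_, ?_, ?_⟩
  · -- strictly decreasing
    intro i j hi hij hjn
    have mono : ∀ s : ℕ, (if s ≤ i then (1:ℤ) else 0) ≤ (if s ≤ j then 1 else 0) := by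
      intro s
      rcases le_or_gt s i with h | h
      · rw [if_pos h, if_pos (by omega)]
      · rw [if_neg (by omega)]
        split <;> norm_num
    have hij' : (i:ℤ) < j := by exact_mod_cast hij
    have m1 := mono (n-d)
    have m2 := mono (n-e)
    have m3 := mul_le_mul_of_nonneg_left (mono (n-1)) (by positivity : (0:ℤ) ≤ (r:ℤ))
    have m4 := mul_le_mul_of_nonneg_left (mono n) (by positivity : (0:ℤ) ≤ (P:ℤ))
    simp only [ha]
    linarith
  · -- balance
    have hsplit : ∑ i ∈ Finset.Icc 1 n, (i:ℤ) * a i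
        = (∑ i ∈ Finset.Icc 1 n, (i:ℤ)*((q:ℤ) - i))
          - (∑ i ∈ Finset.Icc 1 n, (i:ℤ)*(if n-d ≤ i then 1 else 0))
          - (∑ i ∈ Finset.Icc 1 n, (i:ℤ)*(if n-e ≤ i then 1 else 0))
          - (r:ℤ) * (∑ i ∈ Finset.Icc 1 n, (i:ℤ)*(if n-1 ≤ i then 1 else 0))
          - (P:ℤ) * (∑ i ∈ Finset.Icc 1 n, (i:ℤ)*(if n ≤ i then 1 else 0)) := by
      rw [Finset.mul_sum, Finset.mul_sum, ← Finset.sum_sub_distrib, ← Finset.sum_sub_distrib,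
        ← Finset.sum_sub_distrib, ← Finset.sum_sub_distrib]
      refine Finset.sum_congr rfl ?_
      intro i _
      simp only [ha]
      ring
    have h6 : 6 * ∑ i ∈ Finset.Icc 1 n, (i:ℤ) * a i = 0 := by
      rw [hsplit, hqZ]
      linear_combination hB6 - 3*hk1 - 3*hk2 - 3*(r:ℤ)*hk3 - 3*(P:ℤ)*hk4
        + 3*heqZ - (36*(m:ℤ)+12)*hPeZ
    linarith
  · -- weight
    have habs : ∀ i ∈ Finset.Icc 1 n, (i:ℤ) * |a i|
        = (i:ℤ)*|(i:ℤ) - (q:ℤ)|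
          + ((i:ℤ)*(if n-d ≤ i then 1 else 0) + (i:ℤ)*(if n-e ≤ i then 1 else 0)
            + (r:ℤ)*((i:ℤ)*(if n-1 ≤ i then 1 else 0)) + (P:ℤ)*((i:ℤ)*(if n ≤ i then 1 else 0))) := by
      intro i hi
      rw [Finset.mem_Icc] at hi
      rcases lt_or_ge i (n-d) with h | h
      · rw [if_neg (by omega), if_neg (by omega), if_neg (by omega), if_neg (by omega)]
        have : a i = (q:ℤ) - i := by simp only [ha]; rw [if_neg (by omega), if_neg (by omega), if_neg (by omega), if_neg (by omega)]; ring
        rw [this, abs_sub_comm]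
        ring
      · -- i ≥ n - d ≥ q
        have hqi : (q:ℤ) ≤ (i:ℤ) := by exact_mod_cast le_trans hqnd h
        have hind : (0:ℤ) ≤ (if n-d ≤ i then (1:ℤ) else 0) + (if n-e ≤ i then 1 else 0)
            + (r:ℤ)*(if n-1 ≤ i then 1 else 0) + (P:ℤ)*(if n ≤ i then 1 else 0) := by
          have t1 : (0:ℤ) ≤ (if n-d ≤ i then (1:ℤ) else 0) := by split <;> norm_num
          have t2 : (0:ℤ) ≤ (if n-e ≤ i then (1:ℤ) else 0) := by split <;> norm_num
          have t3 : (0:ℤ) ≤ (r:ℤ)*(if n-1 ≤ i then 1 else 0) := by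
            apply mul_nonneg (by positivity); split <;> norm_num
          have t4 : (0:ℤ) ≤ (P:ℤ)*(if n ≤ i then 1 else 0) := by
            apply mul_nonneg (by positivity); split <;> norm_num
          linarith
        have hai : a i ≤ 0 := by simp only [ha]; linarith
        have : |a i| = -(a i) := abs_of_nonpos hai
        rw [this, abs_of_nonneg (by linarith : (0:ℤ) ≤ (i:ℤ) - (q:ℤ))]
        simp only [ha]
        ring
    have hsplitW : ∑ i ∈ Finset.Icc 1 n, (i:ℤ) * |a i|
        = (∑ i ∈ Finset.Icc 1 n, (i:ℤ)*|(i:ℤ) - (q:ℤ)|)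
          + ((∑ i ∈ Finset.Icc 1 n, (i:ℤ)*(if n-d ≤ i then 1 else 0))
            + (∑ i ∈ Finset.Icc 1 n, (i:ℤ)*(if n-e ≤ i then 1 else 0))
            + (r:ℤ) * (∑ i ∈ Finset.Icc 1 n, (i:ℤ)*(if n-1 ≤ i then 1 else 0))
            + (P:ℤ) * (∑ i ∈ Finset.Icc 1 n, (i:ℤ)*(if n ≤ i then 1 else 0))) := by
      rw [Finset.mul_sum, Finset.mul_sum, ← Finset.sum_add_distrib, ← Finset.sum_add_distrib,
        ← Finset.sum_add_distrib, ← Finset.sum_add_distrib]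
      exact Finset.sum_congr rfl habs
    have h6W : 6 * ∑ i ∈ Finset.Icc 1 n, (i:ℤ) * |a i|
        = 2*(8*(k:ℤ)^3 + 24*(k:ℤ)^2 + 22*(k:ℤ) + 6) := by
      rw [hsplitW, hkZ, hqZ]
      linear_combination hA6 + 3*hk1 + 3*hk2 + 3*(r:ℤ)*hk3 + 3*(P:ℤ)*hk4
        - 3*heqZ + (36*(m:ℤ)+12)*hPeZ
    linarith


/-- For `n = 3k+2` with `k` even and `n > 50`, the minimum total weight of a
downhill weighing that is a balance or a tight imbalance equals
`(8k³+24k²+22k+6)/3`, achieved by a balance. (Stated with both sides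
multiplied by 3.) -/
theorem min_weight_three_k_plus_two_even (k n : ℕ) (heven : Even k)
    (hn : n = 3 * k + 2) (hn50 : 50 < n) :
    (∀ a : ℕ → ℤ, (∀ i j : ℕ, 1 ≤ i → i < j → j ≤ n → a j < a i) →
      (∑ i ∈ Finset.Icc 1 n, (i : ℤ) * a i = 0 ∨
        ∑ i ∈ Finset.Icc 1 n, (i : ℤ) * a i = -1) →
      8 * (k : ℤ) ^ 3 + 24 * (k : ℤ) ^ 2 + 22 * (k : ℤ) + 6 ≤
        3 * ∑ i ∈ Finset.Icc 1 n, (i : ℤ) * |a i|) ∧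
    (∃ a : ℕ → ℤ, (∀ i j : ℕ, 1 ≤ i → i < j → j ≤ n → a j < a i) ∧
      ∑ i ∈ Finset.Icc 1 n, (i : ℤ) * a i = 0 ∧
      3 * ∑ i ∈ Finset.Icc 1 n, (i : ℤ) * |a i| =
        8 * (k : ℤ) ^ 3 + 24 * (k : ℤ) ^ 2 + 22 * (k : ℤ) + 6) := by
  constructor
  · intro a hd hs
    exact partA k n hn hn50 a hd hs
  · exact partB k n heven hn hn50
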